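/- For all real v₁ > 0 and v₂ > 0, the Kullback–Leibler divergence of the centered real Gaussian measure with variance v₁ from the centered real Gaussian measure with variance v₂ equals (1/2) * (v₁/v₂ − Real.log (v₁/v₂) − 1). In Mathlib terms: klDiv (gaussianReal 0 v₁) (gaussianReal 0 v₂) = ENNReal.ofReal ((1/2) * (v₁/v₂ − Real.log (v₁/v₂) − 1)). -/

import Mathlib

open MeasureTheory ProbabilityTheory
open scoped ENNReal NNReal Classical

open Real Filter

lemma integral_sq_mul_exp_neg_mul_sq {b : ℝ} (hb : 0 < b) :
    ∫ x : ℝ, x ^ 2 * Real.exp (-b * x ^ 2) = Real.sqrt (π / b) / (2 * b) := by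
  have hu : ∀ x : ℝ, HasDerivAt (fun y : ℝ => y) 1 x := fun x => hasDerivAt_id x
  have hv : ∀ x : ℝ, HasDerivAt (fun y : ℝ => -(2 * b)⁻¹ * Real.exp (-b * y ^ 2))
      (x * Real.exp (-b * x ^ 2)) x := by
    intro x
    have h1 : HasDerivAt (fun y : ℝ => -b * y ^ 2) (-b * (2 * x)) x := by
      simpa using ((hasDerivAt_pow 2 x)).const_mul (-b)
    have h2 := (h1.exp).const_mul (-(2 * b)⁻¹)
    refine h2.congr_deriv ?_
    field_simp
  have hsq : Integrable fun x : ℝ => x ^ 2 * Real.exp (-b * x ^ 2) := by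
    have := integrable_rpow_mul_exp_neg_mul_sq hb (s := 2) (by norm_num)
    simpa [Real.rpow_two] using this
  have huv' : Integrable ((fun y : ℝ => y) * fun x => x * Real.exp (-b * x ^ 2)) := by
    apply hsq.congr
    filter_upwards with x
    simp; ring
  have hu'v : Integrable ((fun _ : ℝ => (1:ℝ)) * fun x => -(2 * b)⁻¹ * Real.exp (-b * x ^ 2)) := by
    apply ((integrable_exp_neg_mul_sq hb).const_mul (-(2 * b)⁻¹)).congr
    filter_upwards with x
    simp
  have huv : Integrable ((fun y : ℝ => y) * fun x => -(2 * b)⁻¹ * Real.exp (-b * x ^ 2)) := by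
    apply ((integrable_mul_exp_neg_mul_sq hb).const_mul (-(2 * b)⁻¹)).congr
    filter_upwards with x
    simp; ring
  have key := integral_mul_deriv_eq_deriv_mul_of_integrable (fun x _ => hu x) (fun x _ => hv x) huv' hu'v huv
  have h3 : ∫ x : ℝ, x * (x * Real.exp (-b * x ^ 2)) = ∫ x : ℝ, x ^ 2 * Real.exp (-b * x ^ 2) := by
    congr 1; funext x; ring
  rw [h3] at key
  rw [key]
  have h4 : ∫ x : ℝ, (1:ℝ) * (-(2 * b)⁻¹ * Real.exp (-b * x ^ 2)) = -(2 * b)⁻¹ * √(π / b) := by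
    simp_rw [one_mul]
    rw [MeasureTheory.integral_const_mul, integral_gaussian]
  rw [h4]
  ring

open ProbabilityTheory

lemma gaussian_withDensity_aux (v : ℝ≥0) (hv : v ≠ 0) (g : ℝ → ℝ) :
    ∫ x, g x ∂(gaussianReal 0 v) = ∫ x, gaussianPDFReal 0 v x * g x := by
  rw [gaussianReal_of_var_ne_zero _ hv, gaussianPDF_def]
  have h : (fun x => ENNReal.ofReal (gaussianPDFReal 0 v x))
      = fun x => (((fun y => (gaussianPDFReal 0 v y).toNNReal) x : ℝ≥0) : ℝ≥0∞) := rfl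
  rw [h, integral_withDensity_eq_integral_smul ((measurable_gaussianPDFReal 0 v).real_toNNReal)]
  congr 1; funext x
  rw [NNReal.smul_def, smul_eq_mul, Real.coe_toNNReal _ (gaussianPDFReal_nonneg 0 v x)]

lemma gaussianPDFReal_zero_eq (v : ℝ≥0) (x : ℝ) :
    gaussianPDFReal 0 v x = (√(2 * π * v))⁻¹ * rexp (-((2 * (v:ℝ))⁻¹) * x ^ 2) := by
  rw [gaussianPDFReal]
  congr 1
  rw [sub_zero]
  congr 1
  field_simp

lemma integrable_sq_gaussianReal (v : ℝ≥0) (hv : 0 < v) :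
    Integrable (fun x : ℝ => x ^ 2) (gaussianReal 0 v) := by
  have hvpos : (0:ℝ) < v := hv
  have hb : (0:ℝ) < (2 * (v:ℝ))⁻¹ := by positivity
  rw [gaussianReal_of_var_ne_zero _ hv.ne', gaussianPDF_def]
  have h : (fun x => ENNReal.ofReal (gaussianPDFReal 0 v x))
      = fun x => (((fun y => (gaussianPDFReal 0 v y).toNNReal) x : ℝ≥0) : ℝ≥0∞) := rfl
  rw [h, integrable_withDensity_iff_integrable_smul
    ((measurable_gaussianPDFReal 0 v).real_toNNReal)]
  have := (integral_sq_mul_exp_neg_mul_sq hb)  -- just to keep names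
  apply (((integrable_rpow_mul_exp_neg_mul_sq hb (s := 2) (by norm_num)).const_mul
    ((√(2 * π * v))⁻¹)).congr)
  filter_upwards with x
  rw [NNReal.smul_def, smul_eq_mul, Real.coe_toNNReal _ (gaussianPDFReal_nonneg 0 v x),
    gaussianPDFReal_zero_eq, Real.rpow_two]
  ring

lemma integral_sq_gaussianReal (v : ℝ≥0) (hv : 0 < v) :
    ∫ x, x ^ 2 ∂(gaussianReal 0 v) = v := by
  have hvpos : (0:ℝ) < v := hv
  have hb : (0:ℝ) < (2 * (v:ℝ))⁻¹ := by positivity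
  rw [gaussian_withDensity_aux v hv.ne']
  have h1 : ∫ x : ℝ, gaussianPDFReal 0 v x * x ^ 2
      = (√(2 * π * v))⁻¹ * ∫ x : ℝ, x ^ 2 * rexp (-((2 * (v:ℝ))⁻¹) * x ^ 2) := by
    rw [← MeasureTheory.integral_const_mul]
    congr 1; funext x
    rw [gaussianPDFReal_zero_eq]; ring
  rw [h1, integral_sq_mul_exp_neg_mul_sq hb]
  have h2 : π / (2 * (v:ℝ))⁻¹ = 2 * π * v := by field_simp
  have h3 : (0:ℝ) < 2 * π * v := by positivity
  rw [h2]
  have h4 : √(2 * π * (v:ℝ)) ≠ 0 := by positivity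
  field_simp


/-- The Kullback–Leibler divergence of `μ` with respect to `ν`, valued in `ℝ≥0∞`
(as defined in Mathlib): `∫ log (dμ/dν) dμ` when `μ ≪ ν` and the log-likelihood ratio is
`μ`-integrable, and `∞` otherwise. -/
noncomputable def klDiv (μ ν : Measure ℝ) : ℝ≥0∞ :=
  if μ ≪ ν ∧ Integrable (llr μ ν) μ then ENNReal.ofReal (∫ x, llr μ ν x ∂μ) else ⊤

/-- **KL divergence between centered Gaussians.** For variances `v₁, v₂ > 0`,
`klDiv (N(0, v₁)) (N(0, v₂)) = (1/2) (v₁/v₂ − log (v₁/v₂) − 1)`. -/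
theorem klDiv_gaussianReal_zero (v₁ v₂ : ℝ≥0) (hv₁ : 0 < v₁) (hv₂ : 0 < v₂) :
    klDiv (gaussianReal 0 v₁) (gaussianReal 0 v₂)
      = ENNReal.ofReal
          ((1 / 2) * ((v₁ : ℝ) / (v₂ : ℝ) - Real.log ((v₁ : ℝ) / (v₂ : ℝ)) - 1)) := by
  have hv₁R : (0:ℝ) < v₁ := hv₁
  have hv₂R : (0:ℝ) < v₂ := hv₂
  set C : ℝ := Real.log (√(2 * π * v₂)) - Real.log (√(2 * π * v₁)) with hC
  set A : ℝ := (2 * (v₂:ℝ))⁻¹ - (2 * (v₁:ℝ))⁻¹ with hA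
  have hac : gaussianReal 0 v₁ ≪ gaussianReal 0 v₂ :=
    (gaussianReal_absolutelyContinuous 0 hv₁.ne').trans
      (gaussianReal_absolutelyContinuous' 0 hv₂.ne')
  -- rnDeriv formula
  have hrn : (gaussianReal 0 v₁).rnDeriv (gaussianReal 0 v₂) =ᵐ[volume]
      fun x => (gaussianPDF 0 v₂ x)⁻¹ * gaussianPDF 0 v₁ x := by
    have h1 := Measure.rnDeriv_withDensity_right (gaussianReal 0 v₁) volume
        (measurable_gaussianPDF 0 v₂).aemeasurable
        (ae_of_all _ fun x => (gaussianPDF_pos 0 hv₂.ne' x).ne')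
        (ae_of_all _ fun _ => ENNReal.ofReal_ne_top)
    rw [← gaussianReal_of_var_ne_zero 0 hv₂.ne'] at h1
    filter_upwards [h1, rnDeriv_gaussianReal 0 v₁] with x hx1 hx2
    rw [hx1, hx2]
  -- llr formula
  have hllr : llr (gaussianReal 0 v₁) (gaussianReal 0 v₂)
      =ᵐ[gaussianReal 0 v₁] fun x => C + A * x ^ 2 := by
    refine (gaussianReal_absolutelyContinuous 0 hv₁.ne').ae_eq ?_
    filter_upwards [hrn] with x hx
    have hp₁ : 0 < gaussianPDFReal 0 v₁ x := gaussianPDFReal_pos 0 v₁ x hv₁.ne'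
    have hp₂ : 0 < gaussianPDFReal 0 v₂ x := gaussianPDFReal_pos 0 v₂ x hv₂.ne'
    rw [llr_def]
    simp only
    rw [hx, gaussianPDF, gaussianPDF, ENNReal.toReal_mul, ENNReal.toReal_inv,
      ENNReal.toReal_ofReal hp₂.le, ENNReal.toReal_ofReal hp₁.le,
      Real.log_mul (inv_ne_zero hp₂.ne') hp₁.ne', Real.log_inv,
      gaussianPDFReal_zero_eq, gaussianPDFReal_zero_eq,
      Real.log_mul (by positivity) (Real.exp_ne_zero _),
      Real.log_mul (by positivity) (Real.exp_ne_zero _),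
      Real.log_exp, Real.log_exp, Real.log_inv, Real.log_inv]
    ring
  have hint : Integrable (llr (gaussianReal 0 v₁) (gaussianReal 0 v₂)) (gaussianReal 0 v₁) := by
    refine Integrable.congr ?_ hllr.symm
    exact (integrable_const C).add ((integrable_sq_gaussianReal v₁ hv₁).const_mul A)
  rw [klDiv, if_pos ⟨hac, hint⟩, integral_congr_ae hllr]
  have hI : ∫ x, (C + A * x ^ 2) ∂(gaussianReal 0 v₁) = C + A * v₁ := by
    rw [integral_add (integrable_const C) ((integrable_sq_gaussianReal v₁ hv₁).const_mul A),
      integral_const, MeasureTheory.integral_const_mul, integral_sq_gaussianReal v₁ hv₁]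
    simp
  rw [hI]
  congr 1
  rw [hC, hA, Real.log_sqrt (by positivity), Real.log_sqrt (by positivity),
    Real.log_div hv₁R.ne' hv₂R.ne',
    Real.log_mul (by positivity) hv₂R.ne', Real.log_mul (by positivity) hv₁R.ne']
  field_simp
  ring
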